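/- Let K be a commutative ring, P a finite poset, V ⊆ P a cosieve (upward-closed subset) with inclusion v : V ↪ P, and F ∈ (K-Mod)^P. Then the counit morphism v_! v^* F → F of the adjunction (v_!, v^*) is an isomorphism if and only if F(x) = 0 for all x ∈ P \ V. -/

import Mathlib

open CategoryTheory CategoryTheory.Limits

universe u

variable (K : Type u) [CommRing K] (P : Type u) [PartialOrder P]

/-- The inclusion functor of a subposet (a subset of `P` with the induced order). -/
def inclFunctor (V : Set P) : (↥V) ⥤ P :=
  (Subtype.mono_coe (· ∈ V)).functor

section Aux

variable (V : Set P)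

instance : (inclFunctor P V).Full where
  map_surjective f := ⟨homOfLE (Subtype.coe_le_coe.mp (leOfHom f)), rfl⟩

instance : (inclFunctor P V).Faithful where
  map_injective _ := Subsingleton.elim _ _

/-- If `V` is a cosieve and `p ∉ V`, there are no costructured arrows to `p`. -/
lemma isEmpty_costructuredArrow (hV : ∀ ⦃a b : P⦄, a ≤ b → a ∈ V → b ∈ V)
    {p : P} (hp : p ∉ V) : IsEmpty (CostructuredArrow (inclFunctor P V) p) :=
  ⟨fun f => hp (hV (leOfHom f.hom) f.left.2)⟩

/-- For `p ∉ V` (a cosieve), the left Kan extension vanishes at `p`. -/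
lemma isZero_lan_obj (hV : ∀ ⦃a b : P⦄, a ≤ b → a ∈ V → b ∈ V)
    (G : ↥V ⥤ ModuleCat.{u} K) {p : P} (hp : p ∉ V) :
    IsZero (((inclFunctor P V).lan.obj G).obj p) := by
  haveI := isEmpty_costructuredArrow P V hV hp
  have hc : IsColimit
      ((Functor.LeftExtension.mk _
        ((inclFunctor P V).leftKanExtensionUnit G)).coconeAt p) :=
    Functor.isPointwiseLeftKanExtensionLeftKanExtensionUnit (inclFunctor P V) G p
  refine (IsInitial.ofUniqueHom
      (fun X => hc.desc ⟨X, ⟨fun j => (IsEmpty.false j).elim,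
        fun j => (IsEmpty.false j).elim⟩⟩)
      (fun X m => hc.hom_ext fun j => (IsEmpty.false j).elim)).isZero

end Aux

/-- Let `V ⊆ P` be a cosieve (upward-closed subset) in a finite poset `P`
with inclusion `v : V ↪ P`.  For `F ∈ (K-Mod)^P`, the counit `v_! v^* F → F` of the
adjunction `(v_!, v^*)` (left Kan extension, restriction) is an isomorphism if and only if
`F(p) = 0` for all `p ∈ P \ V`. -/
theorem statement_13 [Fintype P] (V : Set P)
    (hV : ∀ ⦃a b : P⦄, a ≤ b → a ∈ V → b ∈ V) (F : P ⥤ ModuleCat.{u} K) :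
    IsIso (((inclFunctor P V).lanAdjunction (ModuleCat.{u} K)).counit.app F) ↔
      ∀ p : P, p ∉ V → IsZero (F.obj p) := by
  constructor
  · intro h p hp
    haveI : IsIso ((((inclFunctor P V).lanAdjunction (ModuleCat.{u} K)).counit.app F).app p) :=
      inferInstance
    exact (isZero_lan_obj K P V hV (inclFunctor P V ⋙ F) hp).of_iso
      (asIso ((((inclFunctor P V).lanAdjunction (ModuleCat.{u} K)).counit.app F).app p)).symm
  · intro hz
    have : ∀ p : P,
        IsIso ((((inclFunctor P V).lanAdjunction (ModuleCat.{u} K)).counit.app F).app p) := by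
      intro p
      by_cases hp : p ∈ V
      · have heq := (inclFunctor P V).lanUnit_app_app_lanAdjunction_counit_app_app
          F ⟨p, hp⟩
        haveI : IsIso (((inclFunctor P V).lanUnit.app (inclFunctor P V ⋙ F)).app ⟨p, hp⟩) :=
          (Functor.isPointwiseLeftKanExtensionLeftKanExtensionUnit (inclFunctor P V)
            (inclFunctor P V ⋙ F) ((inclFunctor P V).obj ⟨p, hp⟩)).isIso_hom_app
        exact @IsIso.of_isIso_fac_left _ _ _ _ _ _ _ _ this (IsIso.id _) heq
      · have hs : IsZero ((((inclFunctor P V).lan.obj (inclFunctor P V ⋙ F)).obj p)) :=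
          isZero_lan_obj K P V hV (inclFunctor P V ⋙ F) hp
        have ht := hz p hp
        exact ⟨ht.to_ _, hs.eq_of_src _ _, ht.eq_of_src _ _⟩
    exact NatIso.isIso_of_isIso_app _
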